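/- Let ν, μ be real numbers with ν > -1 and μ > -1, and let b > 0. Then ∫₀¹ x^{ν+1}(1-x²)^μ J_ν(bx) dx = 2^μ Γ(μ+1) b^{-(μ+1)} J_{ν+μ+1}(b), where J_ν is the Bessel function of the first kind of order ν. -/

import Mathlib

open Real MeasureTheory
open Set

lemma betaReal_integrableOn {a c : ℝ} (ha : 0 < a) (hc : 0 < c) :
    IntegrableOn (fun x : ℝ => x ^ (a-1) * (1-x) ^ (c-1)) (Ioc (0:ℝ) 1) := by
  have h := Complex.betaIntegral_convergent (u := (a:ℂ)) (v := (c:ℂ)) (by simpa) (by simpa)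
  rw [intervalIntegrable_iff_integrableOn_Ioc_of_le (by norm_num)] at h
  have := h.re
  refine (IntegrableOn.congr_fun this ?_ measurableSet_Ioc)
  intro x hx
  have hx0 : (0:ℝ) ≤ x := hx.1.le
  have hx1 : (0:ℝ) ≤ 1 - x := by linarith [hx.2]
  have e1 : ((x:ℂ)) ^ ((a:ℂ) - 1) = ((x ^ (a-1) : ℝ) : ℂ) := by
    rw [Complex.ofReal_cpow hx0]; push_cast; ring_nf
  have e2 : ((1:ℂ) - (x:ℂ)) ^ ((c:ℂ) - 1) = (((1-x) ^ (c-1) : ℝ) : ℂ) := by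
    rw [Complex.ofReal_cpow hx1]; push_cast; ring_nf
  simp [e1, e2, ← Complex.ofReal_mul]

lemma betaReal {a c : ℝ} (ha : 0 < a) (hc : 0 < c) :
    ∫ x in Ioo (0:ℝ) 1, x ^ (a-1) * (1-x) ^ (c-1)
      = Gamma a * Gamma c / Gamma (a+c) := by
  have key := Complex.Gamma_mul_Gamma_eq_betaIntegral (s := (a:ℂ)) (t := (c:ℂ))
    (by simpa) (by simpa)
  have hBeta : Complex.betaIntegral (a:ℂ) (c:ℂ)
      = ((∫ x in Ioo (0:ℝ) 1, x ^ (a-1) * (1-x) ^ (c-1) : ℝ) : ℂ) := by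
    rw [Complex.betaIntegral]
    rw [intervalIntegral.integral_of_le (by norm_num : (0:ℝ) ≤ 1)]
    rw [← MeasureTheory.integral_Ioc_eq_integral_Ioo]
    rw [show ((∫ t in Ioc (0:ℝ) 1, t ^ (a-1) * (1-t) ^ (c-1) : ℝ) : ℂ)
        = ∫ t in Ioc (0:ℝ) 1, ((t ^ (a-1) * (1-t) ^ (c-1) : ℝ) : ℂ) from
      (integral_ofReal (𝕜 := ℂ)).symm]
    refine setIntegral_congr_fun measurableSet_Ioc ?_
    intro x hx
    have hx0 : (0:ℝ) ≤ x := hx.1.le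
    have hx1 : (0:ℝ) ≤ 1 - x := by linarith [hx.2]
    have e1 : ((x:ℂ)) ^ ((a:ℂ) - 1) = ((x ^ (a-1) : ℝ) : ℂ) := by
      rw [Complex.ofReal_cpow hx0]; push_cast; ring_nf
    have e2 : ((1:ℂ) - (x:ℂ)) ^ ((c:ℂ) - 1) = (((1-x) ^ (c-1) : ℝ) : ℂ) := by
      rw [Complex.ofReal_cpow hx1]; push_cast; ring_nf
    simp [e1, e2, ← Complex.ofReal_mul]
  rw [hBeta, ← Complex.ofReal_add, Complex.Gamma_ofReal, Complex.Gamma_ofReal,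
    Complex.Gamma_ofReal, ← Complex.ofReal_mul, ← Complex.ofReal_mul] at key
  have := Complex.ofReal_injective key
  have hG : Gamma (a+c) ≠ 0 := (Real.Gamma_pos_of_pos (by linarith)).ne'
  field_simp
  linarith [this]

lemma sq_image_Ioo : (fun x : ℝ => x ^ 2) '' Ioo 0 1 = Ioo (0:ℝ) 1 := by
  ext u
  constructor
  · rintro ⟨x, ⟨hx0, hx1⟩, rfl⟩
    refine ⟨by positivity, ?_⟩
    simp only []
    nlinarith
  · rintro ⟨hu0, hu1⟩
    exact ⟨Real.sqrt u, ⟨Real.sqrt_pos.2 hu0, by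
      rw [show (1:ℝ) = Real.sqrt 1 by simp]
      exact Real.sqrt_lt_sqrt hu0.le hu1⟩, Real.sq_sqrt hu0.le⟩

lemma sq_deriv (x : ℝ) : HasDerivWithinAt (fun x : ℝ => x ^ 2) (2 * x) (Ioo (0:ℝ) 1) x := by
  simpa using ((hasDerivAt_pow 2 x).hasDerivWithinAt (s := Ioo (0:ℝ) 1))

lemma sq_inj : InjOn (fun x : ℝ => x ^ 2) (Ioo 0 1) := by
  intro x hx y hy h
  simp only [] at h
  nlinarith [hx.1, hy.1]

lemma core_subst (g : ℝ → ℝ) :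
    ∫ u in Ioo (0:ℝ) 1, g u = ∫ x in Ioo (0:ℝ) 1, |2 * x| • g (x ^ 2) := by
  conv_lhs => rw [← sq_image_Ioo]
  exact integral_image_eq_integral_abs_deriv_smul measurableSet_Ioo
    (fun x _ => sq_deriv x) sq_inj g

lemma core_eq_on (a μ : ℝ) :
    ∀ x ∈ Ioo (0:ℝ) 1, |2 * x| • ((x^2) ^ (a-1) * (1-x^2) ^ μ)
      = 2 * (x ^ (2*a-1) * (1-x^2) ^ μ) := by
  intro x hx
  have hx0 : (0:ℝ) < x := hx.1
  have h1 : |2 * x| = 2 * x := abs_of_pos (by linarith)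
  have h2 : (x^2 : ℝ) ^ (a-1) = x ^ (2*(a-1)) := by
    rw [← Real.rpow_natCast x 2, ← Real.rpow_mul hx0.le]
    norm_num
  have h3 : x * x ^ (2*(a-1)) = x ^ (2*a-1) := by
    rw [show (2*a-1) = 1 + 2*(a-1) by ring, Real.rpow_add hx0, Real.rpow_one]
  rw [smul_eq_mul, h1, h2]
  calc 2 * x * (x ^ (2*(a-1)) * (1-x^2) ^ μ)
      = 2 * ((x * x ^ (2*(a-1))) * (1-x^2) ^ μ) := by ring
    _ = 2 * (x ^ (2*a-1) * (1-x^2) ^ μ) := by rw [h3]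

lemma core_integrable {a μ : ℝ} (ha : 0 < a) (hμ : -1 < μ) :
    IntegrableOn (fun x : ℝ => x ^ (2*a-1) * (1-x^2) ^ μ) (Ioo (0:ℝ) 1) := by
  have hg : IntegrableOn (fun u : ℝ => u ^ (a-1) * (1-u) ^ ((μ+1)-1)) (Ioo (0:ℝ) 1) :=
    (betaReal_integrableOn ha (by linarith)).mono_set Ioo_subset_Ioc_self
  have := (integrableOn_image_iff_integrableOn_abs_deriv_smul measurableSet_Ioo
    (fun x _ => sq_deriv x) sq_inj (fun u : ℝ => u ^ (a-1) * (1-u) ^ ((μ+1)-1))).1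
    (by rwa [sq_image_Ioo])
  have h2 : IntegrableOn (fun x : ℝ => 2 * (x ^ (2*a-1) * (1-x^2) ^ μ)) (Ioo (0:ℝ) 1) := by
    refine this.congr_fun ?_ measurableSet_Ioo
    intro x hx
    simpa using (core_eq_on a μ x hx)
  have h4 : IntegrableOn (fun x : ℝ => (1/2 : ℝ) * (2 * (x ^ (2*a-1) * (1-x^2) ^ μ)))
      (Ioo (0:ℝ) 1) := h2.const_mul (1/2 : ℝ)
  refine h4.congr_fun ?_ measurableSet_Ioo
  intro x _; ring

lemma core {a μ : ℝ} (ha : 0 < a) (hμ : -1 < μ) :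
    ∫ x in Ioo (0:ℝ) 1, x ^ (2*a-1) * (1-x^2) ^ μ
      = Gamma a * Gamma (μ+1) / (2 * Gamma (a+μ+1)) := by
  have hb := betaReal ha (show (0:ℝ) < μ+1 by linarith)
  have hsub := core_subst (fun u : ℝ => u ^ (a-1) * (1-u) ^ ((μ+1)-1))
  have hcongr : ∫ x in Ioo (0:ℝ) 1, |2 * x| • ((x^2) ^ (a-1) * (1-x^2) ^ ((μ+1)-1))
      = ∫ x in Ioo (0:ℝ) 1, 2 * (x ^ (2*a-1) * (1-x^2) ^ μ) := by
    refine setIntegral_congr_fun measurableSet_Ioo ?_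
    intro x hx
    simpa using core_eq_on a μ x hx
  rw [hsub, hcongr, MeasureTheory.integral_const_mul] at hb
  have : a + (μ+1) = a + μ + 1 := by ring
  rw [this] at hb
  have hG : (0:ℝ) < Gamma (a+μ+1) := Real.Gamma_pos_of_pos (by linarith)
  rw [eq_div_iff (by positivity)]
  rw [eq_div_iff hG.ne'] at hb
  linarith

lemma term_eq_on {ν μ b : ℝ} (hb : 0 < b) (n : ℕ) :
    ∀ x ∈ Ioo (0:ℝ) 1,
      x ^ (ν+1) * (1-x^2) ^ μ * ((b*x/2) ^ (2*(n:ℝ)+ν) / ((n.factorial : ℝ) * Gamma ((n:ℝ)+ν+1)))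
      = ((b/2) ^ (2*(n:ℝ)+ν) / ((n.factorial : ℝ) * Gamma ((n:ℝ)+ν+1)))
        * (x ^ (2*((n:ℝ)+ν+1)-1) * (1-x^2) ^ μ) := by
  intro x hx
  have hx0 : (0:ℝ) < x := hx.1
  have h1 : b*x/2 = (b/2)*x := by ring
  have h2 : ((b/2)*x) ^ (2*(n:ℝ)+ν) = (b/2) ^ (2*(n:ℝ)+ν) * x ^ (2*(n:ℝ)+ν) :=
    Real.mul_rpow (by positivity) hx0.le
  have h3 : x ^ (ν+1) * x ^ (2*(n:ℝ)+ν) = x ^ (2*((n:ℝ)+ν+1)-1) := by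
    rw [← Real.rpow_add hx0]; ring_nf
  calc x ^ (ν+1) * (1-x^2) ^ μ * ((b*x/2) ^ (2*(n:ℝ)+ν) / ((n.factorial : ℝ) * Gamma ((n:ℝ)+ν+1)))
      = x ^ (ν+1) * (1-x^2) ^ μ * ((b/2) ^ (2*(n:ℝ)+ν) * x ^ (2*(n:ℝ)+ν)
          / ((n.factorial : ℝ) * Gamma ((n:ℝ)+ν+1))) := by rw [h1, h2]
    _ = ((b/2) ^ (2*(n:ℝ)+ν) / ((n.factorial : ℝ) * Gamma ((n:ℝ)+ν+1)))
        * ((x ^ (ν+1) * x ^ (2*(n:ℝ)+ν)) * (1-x^2) ^ μ) := by ring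
    _ = _ := by rw [h3]

lemma term_integral {ν μ b : ℝ} (hν : -1 < ν) (hμ : -1 < μ) (hb : 0 < b) (n : ℕ) :
    ∫ x in Ioo (0:ℝ) 1,
      x ^ (ν+1) * (1-x^2) ^ μ * ((b*x/2) ^ (2*(n:ℝ)+ν) / ((n.factorial : ℝ) * Gamma ((n:ℝ)+ν+1)))
      = (b/2) ^ (2*(n:ℝ)+ν) * Gamma (μ+1)
          / (2 * (n.factorial : ℝ) * Gamma ((n:ℝ)+ν+μ+2)) := by
  have han : (0:ℝ) < (n:ℝ)+ν+1 := by
    have : (0:ℝ) ≤ (n:ℝ) := Nat.cast_nonneg n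
    linarith
  rw [setIntegral_congr_fun measurableSet_Ioo (term_eq_on hb n),
    MeasureTheory.integral_const_mul, core han hμ]
  have harg : (n:ℝ)+ν+1+μ+1 = (n:ℝ)+ν+μ+2 := by ring
  rw [harg]
  have hG1 : (0:ℝ) < Gamma ((n:ℝ)+ν+1) := Real.Gamma_pos_of_pos han
  have hG2 : (0:ℝ) < Gamma ((n:ℝ)+ν+μ+2) := Real.Gamma_pos_of_pos (by linarith)
  have hfac : (0:ℝ) < (n.factorial : ℝ) := by positivity
  field_simp

lemma term_integrableOn {ν μ b : ℝ} (hν : -1 < ν) (hμ : -1 < μ) (hb : 0 < b) (n : ℕ) :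
    IntegrableOn (fun x : ℝ =>
      x ^ (ν+1) * (1-x^2) ^ μ * ((b*x/2) ^ (2*(n:ℝ)+ν) / ((n.factorial : ℝ) * Gamma ((n:ℝ)+ν+1))))
      (Ioo (0:ℝ) 1) := by
  have han : (0:ℝ) < (n:ℝ)+ν+1 := by
    have : (0:ℝ) ≤ (n:ℝ) := Nat.cast_nonneg n
    linarith
  have h := (core_integrable han hμ).const_mul
    ((b/2) ^ (2*(n:ℝ)+ν) / ((n.factorial : ℝ) * Gamma ((n:ℝ)+ν+1)))
  exact (IntegrableOn.congr_fun h (fun x hx => (term_eq_on hb n x hx).symm) measurableSet_Ioo)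

lemma term_summable {ν μ b : ℝ} (hν : -1 < ν) (hμ : -1 < μ) (hb : 0 < b) :
    Summable (fun n : ℕ => (b/2) ^ (2*(n:ℝ)+ν) * Gamma (μ+1)
      / (2 * (n.factorial : ℝ) * Gamma ((n:ℝ)+ν+μ+2))) := by
  set f : ℕ → ℝ := fun n => (b/2) ^ (2*(n:ℝ)+ν) * Gamma (μ+1)
      / (2 * (n.factorial : ℝ) * Gamma ((n:ℝ)+ν+μ+2)) with hf
  have hpos : ∀ n : ℕ, 0 < f n := by
    intro n
    have h1 : (0:ℝ) < (b/2) ^ (2*(n:ℝ)+ν) := Real.rpow_pos_of_pos (by positivity) _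
    have h2 : (0:ℝ) < Gamma (μ+1) := Real.Gamma_pos_of_pos (by linarith)
    have h3 : (0:ℝ) < Gamma ((n:ℝ)+ν+μ+2) := Real.Gamma_pos_of_pos
      (by have : (0:ℝ) ≤ (n:ℝ) := Nat.cast_nonneg n; linarith)
    have h4 : (0:ℝ) < (n.factorial : ℝ) := by positivity
    positivity
  have hratio : ∀ n : ℕ, f (n+1) = (b/2)^(2:ℝ) / (((n:ℝ)+1) * ((n:ℝ)+ν+μ+2)) * f n := by
    intro n
    have hs : (0:ℝ) < (n:ℝ)+ν+μ+2 := by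
      have : (0:ℝ) ≤ (n:ℝ) := Nat.cast_nonneg n; linarith
    have e1 : (b/2) ^ (2*((n:ℕ)+1:ℝ)+ν) = (b/2) ^ (2*(n:ℝ)+ν) * (b/2) ^ (2:ℝ) := by
      rw [← Real.rpow_add (by positivity)]
      push_cast
      ring_nf
    have e2 : ((n+1).factorial : ℝ) = ((n:ℝ)+1) * (n.factorial : ℝ) := by
      rw [Nat.factorial_succ]; push_cast; ring
    have e3 : Gamma (((n:ℕ)+1:ℝ)+ν+μ+2) = ((n:ℝ)+ν+μ+2) * Gamma ((n:ℝ)+ν+μ+2) := by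
      rw [show ((n:ℕ)+1:ℝ)+ν+μ+2 = ((n:ℝ)+ν+μ+2) + 1 by push_cast; ring,
        Real.Gamma_add_one hs.ne']
    have h3 : (0:ℝ) < Gamma ((n:ℝ)+ν+μ+2) := Real.Gamma_pos_of_pos hs
    have h4 : (0:ℝ) < (n.factorial : ℝ) := by positivity
    rw [hf]
    simp only [Nat.cast_succ]
    rw [e2, e3]
    rw [show (2*((n:ℝ)+1)+ν) = (2*((n:ℕ)+1:ℝ)+ν) by push_cast; ring, e1]
    field_simp
  have hto : Filter.Tendsto (fun n : ℕ => ((n:ℝ)+1) * ((n:ℝ)+ν+μ+2)) Filter.atTop Filter.atTop := by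
    apply Filter.Tendsto.atTop_mul_atTop₀
    · exact Filter.tendsto_atTop_add_const_right _ 1 tendsto_natCast_atTop_atTop
    · have := Filter.tendsto_atTop_add_const_right Filter.atTop (ν+μ+2)
        (tendsto_natCast_atTop_atTop (R := ℝ))
      refine this.congr (fun n => by ring)
  have hev : ∀ᶠ n : ℕ in Filter.atTop, ‖f (n+1)‖ ≤ (1/2) * ‖f n‖ := by
    filter_upwards [hto.eventually_ge_atTop (2 * (b/2)^(2:ℝ))] with n hn
    have hs : (0:ℝ) < ((n:ℝ)+1) * ((n:ℝ)+ν+μ+2) := by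
      have h2 : (0:ℝ) < (b/2)^(2:ℝ) := Real.rpow_pos_of_pos (by positivity) _
      linarith
    rw [Real.norm_of_nonneg (hpos _).le, Real.norm_of_nonneg (hpos _).le, hratio n]
    have hle : (b/2)^(2:ℝ) / (((n:ℝ)+1) * ((n:ℝ)+ν+μ+2)) ≤ 1/2 := by
      rw [div_le_iff₀ hs]
      linarith
    have := mul_le_mul_of_nonneg_right hle (hpos n).le
    linarith
  exact summable_of_ratio_norm_eventually_le (by norm_num) hev

/-- Bessel function of the first kind of order `ν`. -/
noncomputable def besselJ (ν x : ℝ) : ℝ :=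
  ∑' n : ℕ, (-1) ^ n * (x / 2) ^ (2 * (n:ℝ) + ν) /
    ((n.factorial : ℝ) * Real.Gamma ((n:ℝ) + ν + 1))

theorem bessel_weber_schafheitlin_integral (ν μ b : ℝ) (hν : -1 < ν) (hμ : -1 < μ) (hb : 0 < b) :
    ∫ x in Set.Ioo (0:ℝ) 1, x ^ (ν + 1) * (1 - x ^ 2) ^ μ * besselJ ν (b * x)
      = 2 ^ μ * Real.Gamma (μ + 1) * b ^ (-(μ + 1)) * besselJ (ν + μ + 1) b := by
  set T : ℕ → ℝ → ℝ := fun n x =>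
    x ^ (ν+1) * (1-x^2) ^ μ *
      ((-1)^n * (b*x/2) ^ (2*(n:ℝ)+ν) / ((n.factorial : ℝ) * Gamma ((n:ℝ)+ν+1))) with hT
  have hpt : ∀ x : ℝ, x ^ (ν + 1) * (1 - x ^ 2) ^ μ * besselJ ν (b * x) = ∑' n, T n x := by
    intro x
    rw [besselJ, ← tsum_mul_left]
  have hmeas : ∀ n, AEStronglyMeasurable (T n) (volume.restrict (Ioo (0:ℝ) 1)) := by
    intro n
    refine Measurable.aestronglyMeasurable ?_
    fun_prop
  have habs : ∀ n : ℕ, ∀ x ∈ Ioo (0:ℝ) 1, |T n x|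
      = x ^ (ν+1) * (1-x^2) ^ μ *
        ((b*x/2) ^ (2*(n:ℝ)+ν) / ((n.factorial : ℝ) * Gamma ((n:ℝ)+ν+1))) := by
    intro n x hx
    have hx0 : (0:ℝ) < x := hx.1
    have hx2 : (0:ℝ) < 1 - x^2 := by nlinarith [hx.2]
    have hG : (0:ℝ) < Gamma ((n:ℝ)+ν+1) := Real.Gamma_pos_of_pos
      (by have : (0:ℝ) ≤ (n:ℝ) := Nat.cast_nonneg n; linarith)
    have hP : (0:ℝ) < (b*x/2) ^ (2*(n:ℝ)+ν) := Real.rpow_pos_of_pos (by positivity) _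
    have h1 : T n x = (-1:ℝ)^n * (x ^ (ν+1) * (1-x^2) ^ μ *
        ((b*x/2) ^ (2*(n:ℝ)+ν) / ((n.factorial : ℝ) * Gamma ((n:ℝ)+ν+1)))) := by
      rw [hT]; ring
    rw [h1, abs_mul, abs_pow, abs_neg, abs_one, one_pow, one_mul, abs_of_nonneg (by positivity)]
  have hlint : ∀ n : ℕ, ∫⁻ x in Ioo (0:ℝ) 1, ‖T n x‖₊
      = ENNReal.ofReal ((b/2) ^ (2*(n:ℝ)+ν) * Gamma (μ+1)
          / (2 * (n.factorial : ℝ) * Gamma ((n:ℝ)+ν+μ+2))) := by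
    intro n
    rw [← term_integral hν hμ hb n]
    rw [ofReal_integral_eq_lintegral_ofReal (term_integrableOn hν hμ hb n) ?_]
    · refine setLIntegral_congr_fun measurableSet_Ioo (fun x hx => ?_)
      rw [← enorm_eq_nnnorm, ← ofReal_norm, Real.norm_eq_abs, habs n x hx]
    · refine (ae_restrict_iff' measurableSet_Ioo).2 (ae_of_all _ fun x hx => ?_)
      have hx0 : (0:ℝ) < x := hx.1
      have hx2 : (0:ℝ) < 1 - x^2 := by nlinarith [hx.2]
      have hG : (0:ℝ) < Gamma ((n:ℝ)+ν+1) := Real.Gamma_pos_of_pos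
        (by have : (0:ℝ) ≤ (n:ℝ) := Nat.cast_nonneg n; linarith)
      have hP : (0:ℝ) < (b*x/2) ^ (2*(n:ℝ)+ν) := Real.rpow_pos_of_pos (by positivity) _
      positivity
  have hfin : ∑' n : ℕ, ∫⁻ x in Ioo (0:ℝ) 1, ‖T n x‖₊ ≠ ⊤ := by
    simp_rw [hlint]
    rw [← ENNReal.ofReal_tsum_of_nonneg ?_ (term_summable hν hμ hb)]
    · exact ENNReal.ofReal_ne_top
    · intro n
      have h1 : (0:ℝ) < (b/2) ^ (2*(n:ℝ)+ν) := Real.rpow_pos_of_pos (by positivity) _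
      have h2 : (0:ℝ) < Gamma (μ+1) := Real.Gamma_pos_of_pos (by linarith)
      have h3 : (0:ℝ) < Gamma ((n:ℝ)+ν+μ+2) := Real.Gamma_pos_of_pos
        (by have : (0:ℝ) ≤ (n:ℝ) := Nat.cast_nonneg n; linarith)
      have h4 : (0:ℝ) < (n.factorial : ℝ) := by positivity
      positivity
  have hint : ∀ n : ℕ, ∫ x in Ioo (0:ℝ) 1, T n x
      = (-1:ℝ)^n * ((b/2) ^ (2*(n:ℝ)+ν) * Gamma (μ+1)
          / (2 * (n.factorial : ℝ) * Gamma ((n:ℝ)+ν+μ+2))) := by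
    intro n
    have h1 : ∀ x : ℝ, T n x = (-1:ℝ)^n * (x ^ (ν+1) * (1-x^2) ^ μ *
        ((b*x/2) ^ (2*(n:ℝ)+ν) / ((n.factorial : ℝ) * Gamma ((n:ℝ)+ν+1)))) := by
      intro x; rw [hT]; ring
    simp_rw [h1]
    rw [MeasureTheory.integral_const_mul, term_integral hν hμ hb n]
  have hS : (2:ℝ)^μ * b^(-(μ+1)) * (b/2)^(μ+1) = 1/2 := by
    rw [Real.div_rpow hb.le (by norm_num : (0:ℝ) ≤ 2)]
    rw [show (2:ℝ)^μ * b^(-(μ+1)) * (b^(μ+1)/(2:ℝ)^(μ+1))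
        = (b^(-(μ+1)) * b^(μ+1)) * ((2:ℝ)^μ / (2:ℝ)^(μ+1)) by ring]
    rw [← Real.rpow_add hb, ← Real.rpow_sub (by norm_num : (0:ℝ) < 2)]
    rw [show -(μ+1)+(μ+1) = 0 by ring, show μ-(μ+1) = -1 by ring,
      Real.rpow_zero, Real.rpow_neg_one]
    norm_num
  calc ∫ x in Set.Ioo (0:ℝ) 1, x ^ (ν + 1) * (1 - x ^ 2) ^ μ * besselJ ν (b * x)
      = ∫ x in Ioo (0:ℝ) 1, ∑' n, T n x := by
        exact integral_congr_ae (ae_of_all _ fun x => hpt x)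
    _ = ∑' n, ∫ x in Ioo (0:ℝ) 1, T n x := integral_tsum hmeas hfin
    _ = 2 ^ μ * Real.Gamma (μ + 1) * b ^ (-(μ + 1)) * besselJ (ν + μ + 1) b := by
        rw [besselJ, ← tsum_mul_left]
        refine tsum_congr fun n => ?_
        rw [hint n]
        rw [show (n:ℝ) + (ν+μ+1) + 1 = (n:ℝ)+ν+μ+2 by ring]
        have e1 : (b/2) ^ (2*(n:ℝ) + (ν+μ+1)) = (b/2)^(2*(n:ℝ)+ν) * (b/2)^(μ+1) := by
          rw [← Real.rpow_add (by positivity : (0:ℝ) < b/2)]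
          congr 1
          ring
        rw [e1]
        rw [show 2 ^ μ * Gamma (μ + 1) * b ^ (-(μ + 1)) *
            ((-1)^n * ((b/2)^(2*(n:ℝ)+ν) * (b/2)^(μ+1)) / ((n.factorial : ℝ) * Gamma ((n:ℝ)+ν+μ+2)))
            = ((2:ℝ)^μ * b^(-(μ+1)) * (b/2)^(μ+1)) *
              ((-1)^n * ((b/2)^(2*(n:ℝ)+ν) * Gamma (μ+1)) / ((n.factorial : ℝ) * Gamma ((n:ℝ)+ν+μ+2))) by ring,
          hS]
        ring
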